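/- Let A be a commutative ring, and let B and C be commutative A-algebras. Assume B is a Noetherian unique factorization domain, C is flat and finitely generated as an A-algebra, and for every field K that is an A-algebra, the tensor product K ⊗_A C is a unique factorization domain whose units are exactly the images of the nonzero elements of K. Then every irreducible element of B ⊗_A C is a prime element of B ⊗_A C. -/

import Mathlib

open TensorProduct

universe u

section Aux

variable {A C : Type u} [CommRing A] [CommRing C] [Algebra A C] [Module.Flat A C]

lemma aux_tensor_injective {B' K' : Type u} [CommRing B'] [CommRing K']
    [Algebra A B'] [Algebra A K'] (f : B' →ₐ[A] K') (hf : Function.Injective f) :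
    Function.Injective (Algebra.TensorProduct.map f (AlgHom.id A C)) := by
  have h : (Algebra.TensorProduct.map f (AlgHom.id A C)).toLinearMap
      = LinearMap.rTensor C f.toLinearMap := by
    apply TensorProduct.ext'
    intro b c
    simp
  have hinj := Module.Flat.rTensor_preserves_injective_linearMap (M := C) f.toLinearMap hf
  rw [← h] at hinj
  exact hinj

lemma aux_isDomain
    (hdom : ∀ (K : Type u) [Field K] [Algebra A K], IsDomain (K ⊗[A] C))
    (B' : Type u) [CommRing B'] [IsDomain B'] [Algebra A B'] :
    IsDomain (B' ⊗[A] C) := by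
  haveI : IsDomain ((FractionRing B') ⊗[A] C) := hdom (FractionRing B')
  exact Function.Injective.isDomain
    (Algebra.TensorProduct.map (IsScalarTower.toAlgHom A B' (FractionRing B'))
      (AlgHom.id A C)).toRingHom
    (aux_tensor_injective _ (IsFractionRing.injective B' (FractionRing B')))

lemma aux_prime
    (hdom : ∀ (K : Type u) [Field K] [Algebra A K], IsDomain (K ⊗[A] C))
    {B' : Type u} [CommRing B'] [IsDomain B'] [Algebra A B'] {p : B'} (hp : Prime p)
    (hne : algebraMap B' (B' ⊗[A] C) p ≠ 0) :
    Prime (algebraMap B' (B' ⊗[A] C) p) := by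
  set I : Ideal B' := Ideal.span {p} with hI
  haveI hIp : I.IsPrime := (Ideal.span_singleton_prime hp.ne_zero).mpr hp
  haveI : IsDomain (B' ⧸ I) := Ideal.Quotient.isDomain I
  haveI : IsDomain ((B' ⧸ I) ⊗[A] C) := aux_isDomain hdom (B' ⧸ I)
  set ψ := Algebra.TensorProduct.map (Ideal.Quotient.mkₐ A I) (AlgHom.id A C) with hψ
  have hker : RingHom.ker ψ = Ideal.span {algebraMap B' (B' ⊗[A] C) p} := by
    rw [hψ, Algebra.TensorProduct.rTensor_ker _ (Ideal.Quotient.mkₐ_surjective A I)]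
    have h1 : RingHom.ker (Ideal.Quotient.mkₐ A I) = I := by
      ext t
      simp [RingHom.mem_ker, Ideal.Quotient.eq_zero_iff_mem]
    rw [h1, hI, Ideal.map_span, Set.image_singleton]
    rfl
  have hprime : (RingHom.ker ψ).IsPrime := RingHom.ker_isPrime ψ
  rw [hker] at hprime
  exact (Ideal.span_singleton_prime hne).mp hprime

end Aux

set_option maxHeartbeats 1000000 in
/-- Under the hypotheses of the UFD tensor product proposition, every irreducible element of
`B ⊗[A] C` is prime. -/
theorem irreducible_is_prime_tensor (A B C : Type u) [CommRing A] [CommRing B] [CommRing C]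
    [Algebra A B] [Algebra A C]
    [IsNoetherianRing B] [IsDomain B] [UniqueFactorizationMonoid B]
    [Module.Flat A C] [Algebra.FiniteType A C]
    (hdom : ∀ (K : Type u) [Field K] [Algebra A K], IsDomain (K ⊗[A] C))
    (hufd : ∀ (K : Type u) [Field K] [Algebra A K] [IsDomain (K ⊗[A] C)],
      UniqueFactorizationMonoid (K ⊗[A] C))
    (hunits : ∀ (K : Type u) [Field K] [Algebra A K] (z : K ⊗[A] C),
      IsUnit z ↔ ∃ c : K, c ≠ 0 ∧ algebraMap K (K ⊗[A] C) c = z)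
    (x : B ⊗[A] C) (hx : Irreducible x) :
    Prime x := by
  classical
  set K := FractionRing B with hK
  haveI hD : IsDomain (K ⊗[A] C) := hdom K
  haveI hR : IsDomain (B ⊗[A] C) := aux_isDomain hdom B
  haveI hDufd : UniqueFactorizationMonoid (K ⊗[A] C) := hufd K
  set φ : B ⊗[A] C →ₐ[A] K ⊗[A] C :=
    Algebra.TensorProduct.map (IsScalarTower.toAlgHom A B K) (AlgHom.id A C) with hφdef
  have hφ : Function.Injective φ :=
    aux_tensor_injective _ (IsFractionRing.injective B K)
  have hcomm : ∀ b : B, φ (algebraMap B (B ⊗[A] C) b)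
      = algebraMap K (K ⊗[A] C) (algebraMap B K b) := by
    intro b
    rw [Algebra.TensorProduct.algebraMap_apply, Algebra.TensorProduct.algebraMap_apply]
    simp [hφdef]
  -- images of nonzero elements of B are units in K ⊗ C
  have hunit_im : ∀ s : B, s ≠ 0 → IsUnit (φ (algebraMap B (B ⊗[A] C) s)) := by
    intro s hs
    rw [hcomm]
    exact (hunits K _).mpr ⟨algebraMap B K s,
      (map_ne_zero_iff _ (IsFractionRing.injective B K)).mpr hs, rfl⟩
  have hnz : ∀ b : B, b ≠ 0 → algebraMap B (B ⊗[A] C) b ≠ 0 := by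
    intro b hb h0
    have h := hunit_im b hb
    rw [h0, map_zero] at h
    exact h.ne_zero rfl
  -- primes of B remain prime
  have hprime : ∀ p : B, Prime p → Prime (algebraMap B (B ⊗[A] C) p) := by
    intro p hp
    exact aux_prime hdom hp (hnz p hp.ne_zero)
  -- common denominators
  have hden : ∀ z : K ⊗[A] C, ∃ (s : B) (r : B ⊗[A] C),
      s ≠ 0 ∧ z * φ (algebraMap B (B ⊗[A] C) s) = φ r := by
    intro z
    induction z using TensorProduct.induction_on with
    | zero => exact ⟨1, 0, one_ne_zero, by simp⟩
    | tmul k c =>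
      obtain ⟨⟨b, s⟩, hbs⟩ := IsLocalization.mk'_surjective (nonZeroDivisors B) k
      have hbs : IsLocalization.mk' K b s = k := hbs
      refine ⟨(s : B), b ⊗ₜ c, nonZeroDivisors.ne_zero s.2, ?_⟩
      have h1 : φ (algebraMap B (B ⊗[A] C) (s : B)) = (algebraMap B K (s : B)) ⊗ₜ[A] (1 : C) := by
        rw [hcomm, Algebra.TensorProduct.algebraMap_apply]
        simp
      have h2 : φ (b ⊗ₜ c) = (algebraMap B K b) ⊗ₜ[A] c := by
        simp [hφdef]
      rw [h1, h2, Algebra.TensorProduct.tmul_mul_tmul, mul_one]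
      congr 1
      rw [← hbs]
      exact IsLocalization.mk'_spec K b s
    | add z₁ z₂ ih₁ ih₂ =>
      obtain ⟨s₁, r₁, h₁, e₁⟩ := ih₁
      obtain ⟨s₂, r₂, h₂, e₂⟩ := ih₂
      refine ⟨s₁ * s₂, r₁ * algebraMap B (B ⊗[A] C) s₂ + r₂ * algebraMap B (B ⊗[A] C) s₁,
        mul_ne_zero h₁ h₂, ?_⟩
      have expand : (z₁ + z₂) * φ (algebraMap B (B ⊗[A] C) (s₁ * s₂))
          = (z₁ * φ (algebraMap B (B ⊗[A] C) s₁)) * φ (algebraMap B (B ⊗[A] C) s₂)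
            + (z₂ * φ (algebraMap B (B ⊗[A] C) s₂)) * φ (algebraMap B (B ⊗[A] C) s₁) := by
        rw [map_mul, map_mul]
        ring
      rw [expand, e₁, e₂, map_add, map_mul, map_mul]
  -- peeling off primes
  have peel : ∀ m : Multiset B, (∀ p ∈ m, Prime p) → ∀ w y z : B ⊗[A] C,
      algebraMap B (B ⊗[A] C) m.prod * w = y * z →
      ∃ (y₁ z₁ : B ⊗[A] C) (b₁ b₂ : B), b₁ ≠ 0 ∧ b₂ ≠ 0 ∧ w = y₁ * z₁ ∧
        y = algebraMap B (B ⊗[A] C) b₁ * y₁ ∧ z = algebraMap B (B ⊗[A] C) b₂ * z₁ := by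
    intro m
    induction m using Multiset.induction_on with
    | empty =>
      intro _ w y z h
      rw [Multiset.prod_zero, map_one, one_mul] at h
      exact ⟨y, z, 1, 1, one_ne_zero, one_ne_zero, h, by rw [map_one, one_mul], by rw [map_one, one_mul]⟩
    | cons p m ih =>
      intro hm w y z h
      have hpB : Prime p := hm p (Multiset.mem_cons_self p m)
      have hp : Prime (algebraMap B (B ⊗[A] C) p) := hprime p hpB
      rw [Multiset.prod_cons, map_mul, mul_assoc] at h
      have hdvd : algebraMap B (B ⊗[A] C) p ∣ y * z :=
        ⟨algebraMap B (B ⊗[A] C) m.prod * w, h.symm⟩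
      rcases hp.2.2 y z hdvd with ⟨y₂, hy₂⟩ | ⟨z₂, hz₂⟩
      · have h' : algebraMap B (B ⊗[A] C) m.prod * w = y₂ * z :=
          mul_left_cancel₀ hp.ne_zero (by rw [h, hy₂]; ring)
        obtain ⟨y₁, z₁, b₁, b₂, hb₁, hb₂, hw, hy, hz⟩ :=
          ih (fun q hq => hm q (Multiset.mem_cons_of_mem hq)) w y₂ z h'
        exact ⟨y₁, z₁, p * b₁, b₂, mul_ne_zero hpB.ne_zero hb₁, hb₂, hw,
          by rw [hy₂, hy, map_mul]; ring, hz⟩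
      · have h' : algebraMap B (B ⊗[A] C) m.prod * w = y * z₂ :=
          mul_left_cancel₀ hp.ne_zero (by rw [h, hz₂]; ring)
        obtain ⟨y₁, z₁, b₁, b₂, hb₁, hb₂, hw, hy, hz⟩ :=
          ih (fun q hq => hm q (Multiset.mem_cons_of_mem hq)) w y z₂ h'
        exact ⟨y₁, z₁, b₁, p * b₂, hb₁, mul_ne_zero hpB.ne_zero hb₂, hw, hy,
          by rw [hz₂, hz, map_mul]; ring⟩
  -- main case split: does x have a prime factor coming from B?
  by_cases hass : ∃ q : B, Prime q ∧ algebraMap B (B ⊗[A] C) q ∣ x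
  · obtain ⟨q, hq, t, ht⟩ := hass
    rcases hx.isUnit_or_isUnit ht with h | h
    · exact absurd h (hprime q hq).not_unit
    · have hAss : Associated (algebraMap B (B ⊗[A] C) q) x :=
        ⟨h.unit, by rw [IsUnit.unit_spec, ← ht]⟩
      exact hAss.prime (hprime q hq)
  · -- no prime factor from B; in particular any nonzero b : B dividing x has unit image
    have hstep : ∀ b₁ : B, b₁ ≠ 0 → algebraMap B (B ⊗[A] C) b₁ ∣ x →
        IsUnit (algebraMap B (B ⊗[A] C) b₁) := by
      intro b₁ h0 hdvd
      by_cases hb : IsUnit b₁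
      · exact hb.map _
      · exfalso
        obtain ⟨q, hqirr, hqdvd⟩ := WfDvdMonoid.exists_irreducible_factor hb h0
        have hq : Prime q := UniqueFactorizationMonoid.irreducible_iff_prime.mp hqirr
        exact hass ⟨q, hq, dvd_trans (map_dvd _ hqdvd) hdvd⟩
    by_cases huφ : IsUnit (φ x)
    · -- impossible: x would be associated to an element of B, hence a unit or with prime factor
      obtain ⟨k, hk0, hkx⟩ := (hunits K (φ x)).mp huφ
      obtain ⟨⟨b, s⟩, hbs⟩ := IsLocalization.mk'_surjective (nonZeroDivisors B) k
      have hbs : IsLocalization.mk' K b s = k := hbs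
      have hs0 : (s : B) ≠ 0 := nonZeroDivisors.ne_zero s.2
      have key : x * algebraMap B (B ⊗[A] C) (s : B) = algebraMap B (B ⊗[A] C) b := by
        apply hφ
        rw [map_mul, hcomm, hcomm, ← hkx, ← map_mul, ← hbs, IsLocalization.mk'_spec]
      have hb0 : b ≠ 0 := by
        rintro rfl
        rw [map_zero] at key
        exact (mul_ne_zero hx.ne_zero (hnz (s : B) hs0)) key
      obtain ⟨m, hm, hAssoc⟩ := UniqueFactorizationMonoid.exists_prime_factors b hb0
      obtain ⟨u, hu⟩ := hAssoc
      have heq : algebraMap B (B ⊗[A] C) m.prod * algebraMap B (B ⊗[A] C) (u : B)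
          = x * algebraMap B (B ⊗[A] C) (s : B) := by
        rw [← map_mul, hu, ← key]
      obtain ⟨y₁, z₁, b₁, b₂, hb₁, hb₂, hw, hy, hz⟩ :=
        peel m hm (algebraMap B (B ⊗[A] C) (u : B)) x (algebraMap B (B ⊗[A] C) (s : B)) heq
      have hy₁ : IsUnit y₁ := by
        have : IsUnit (y₁ * z₁) := hw ▸ (u.isUnit.map (algebraMap B (B ⊗[A] C)))
        exact isUnit_of_mul_isUnit_left this
      have hb₁u : IsUnit (algebraMap B (B ⊗[A] C) b₁) := hstep b₁ hb₁ ⟨y₁, hy⟩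
      exact absurd (by rw [hy]; exact hb₁u.mul hy₁) hx.not_isUnit
    · -- φ x is irreducible in the UFD K ⊗ C, hence prime
      have hirr : Irreducible (φ x) := by
        refine ⟨huφ, fun Y Z hYZ => ?_⟩
        obtain ⟨s₁, y', hs₁, e₁⟩ := hden Y
        obtain ⟨s₂, z', hs₂, e₂⟩ := hden Z
        have key : x * algebraMap B (B ⊗[A] C) (s₁ * s₂) = y' * z' := by
          apply hφ
          simp only [map_mul, hYZ, ← e₁, ← e₂]
          ring
        obtain ⟨m, hm, hAssoc⟩ := UniqueFactorizationMonoid.exists_prime_factors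
          (s₁ * s₂) (mul_ne_zero hs₁ hs₂)
        obtain ⟨u, hu⟩ := hAssoc
        set v : (B ⊗[A] C)ˣ := Units.map (algebraMap B (B ⊗[A] C)).toMonoidHom u with hv
        have hvcoe : (v : B ⊗[A] C) = algebraMap B (B ⊗[A] C) (u : B) := rfl
        have heq : algebraMap B (B ⊗[A] C) m.prod * ((v : B ⊗[A] C) * x) = y' * z' := by
          rw [← key, hvcoe, ← mul_assoc, ← map_mul, hu]
          ring
        obtain ⟨y₁, z₁, b₁, b₂, hb₁, hb₂, hw, hy, hz⟩ :=
          peel m hm ((v : B ⊗[A] C) * x) y' z' heq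
        have hx2 : x = ((v⁻¹ : (B ⊗[A] C)ˣ) * y₁) * z₁ := by
          rw [mul_assoc, ← hw, ← mul_assoc, Units.inv_mul, one_mul]
        rcases hx.isUnit_or_isUnit hx2 with h | h
        · left
          have hy₁ : IsUnit y₁ := by
            have hrw : y₁ = (v : B ⊗[A] C) * ((v⁻¹ : (B ⊗[A] C)ˣ) * y₁) := by
              rw [← mul_assoc, Units.mul_inv, one_mul]
            rw [hrw]
            exact v.isUnit.mul h
          have hYs : IsUnit (Y * φ (algebraMap B (B ⊗[A] C) s₁)) := by
            rw [e₁, hy, map_mul]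
            exact (hunit_im b₁ hb₁).mul (hy₁.map φ)
          exact isUnit_of_mul_isUnit_left hYs
        · right
          have hZs : IsUnit (Z * φ (algebraMap B (B ⊗[A] C) s₂)) := by
            rw [e₂, hz, map_mul]
            exact (hunit_im b₂ hb₂).mul (h.map φ)
          exact isUnit_of_mul_isUnit_left hZs
      have hpφ : Prime (φ x) := UniqueFactorizationMonoid.irreducible_iff_prime.mp hirr
      -- pull primality back to B ⊗ C
      have final : ∀ a : B ⊗[A] C, φ x ∣ φ a → x ∣ a := by
        intro a hdvd
        obtain ⟨W, hW⟩ := hdvd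
        obtain ⟨s, w, hs, e⟩ := hden W
        have key : a * algebraMap B (B ⊗[A] C) s = x * w := by
          apply hφ
          rw [map_mul, map_mul, hW, ← e]
          ring
        obtain ⟨m, hm, hAssoc⟩ := UniqueFactorizationMonoid.exists_prime_factors s hs
        obtain ⟨u, hu⟩ := hAssoc
        set v : (B ⊗[A] C)ˣ := Units.map (algebraMap B (B ⊗[A] C)).toMonoidHom u with hv
        have hvcoe : (v : B ⊗[A] C) = algebraMap B (B ⊗[A] C) (u : B) := rfl
        have heq : algebraMap B (B ⊗[A] C) m.prod * ((v : B ⊗[A] C) * a) = x * w := by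
          rw [← key, hvcoe, ← mul_assoc, ← map_mul, hu]
          ring
        obtain ⟨y₁, z₁, b₁, b₂, hb₁, hb₂, hw2, hy2, hz2⟩ :=
          peel m hm ((v : B ⊗[A] C) * a) x w heq
        have hb₁u : IsUnit (algebraMap B (B ⊗[A] C) b₁) := hstep b₁ hb₁ ⟨y₁, hy2⟩
        obtain ⟨e', he'⟩ := hb₁u
        have hxy : x ∣ y₁ := ⟨(e'⁻¹ : (B ⊗[A] C)ˣ), by
          rw [hy2, ← he', mul_comm (e' : B ⊗[A] C) y₁, mul_assoc, Units.mul_inv, mul_one]⟩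
        have hxva : x ∣ (v : B ⊗[A] C) * a := hxy.trans ⟨z₁, hw2⟩
        rwa [Units.dvd_mul_left] at hxva
      refine ⟨hx.ne_zero, hx.not_isUnit, fun a b hab => ?_⟩
      have hdvd : φ x ∣ φ a * φ b := by
        rw [← map_mul]
        exact map_dvd φ hab
      rcases hpφ.2.2 _ _ hdvd with h | h
      · exact Or.inl (final a h)
      · exact Or.inr (final b h)
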